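/- The Kuranishi map identifies the gauge-reduced Maurer–Cartan set with the Kuranishi set: let F be the Kuranishi map on sequences, F(a)_b = a_b + (1/2) h₂([a,a]_b), which is a bijection of the set of sequences {1,2,...} → g¹ with itself. Let MC∩N¹ be the set of sequences τ that satisfy the Maurer–Cartan equation degreewise and have τ_b ∈ range ∇₁ ⊔ range h₂ (no boundary component) for all b, and let Kur be the set of sequences y with y_b ∈ range ∇₁ for all b such that the obstructions of τ = F⁻¹(y) vanish: π₂([τ,τ]_b) = 0 for all b ≥ 1. Then F restricts to a bijection from MC∩N¹ onto Kur. -/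

import Mathlib

/-- Extension of a sequence indexed by {1,2,3,...} to ℕ by zero. -/
def ext {V : Type*} [AddCommGroup V] (a : ℕ+ → V) : ℕ → V :=
  fun n => if h : 0 < n then a ⟨n, h⟩ else 0

/-- The convolution [τ,τ´]_b = Σ_{i+j=b, i,j≥1} [τ_i, τ´_j] of two sequences
with respect to a bilinear bracket (terms with index 0 vanish). -/
def bconv {K V W : Type*} [Field K] [AddCommGroup V] [Module K V]
    [AddCommGroup W] [Module K W]
    (Q : V →ₗ[K] V →ₗ[K] W) (a b : ℕ+ → V) (n : ℕ+) : W :=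
  ∑ i ∈ Finset.range ((n : ℕ) + 1), Q (ext a i) (ext b ((n : ℕ) - i))

lemma ext_zero {V : Type*} [AddCommGroup V] (a : ℕ+ → V) : ext a 0 = 0 := by simp [ext]

lemma ext_pos {V : Type*} [AddCommGroup V] (a : ℕ+ → V) (i : ℕ) (h : 0 < i) :
    ext a i = a ⟨i, h⟩ := by simp [ext, h]

lemma bconv_congr {K V W : Type*} [Field K] [AddCommGroup V] [Module K V]
    [AddCommGroup W] [Module K W]
    (Q : V →ₗ[K] V →ₗ[K] W) (a a' c c' : ℕ+ → V) (n : ℕ+)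
    (ha : ∀ i : ℕ+, (i : ℕ) < (n : ℕ) → a i = a' i)
    (hc : ∀ i : ℕ+, (i : ℕ) < (n : ℕ) → c i = c' i) :
    bconv Q a c n = bconv Q a' c' n := by
  unfold bconv
  apply Finset.sum_congr rfl
  intro i hi
  rcases Nat.eq_zero_or_pos i with h0 | h0
  · subst h0; simp [ext_zero]
  have hin : i ≤ (n : ℕ) := Nat.lt_succ_iff.mp (Finset.mem_range.mp hi)
  rcases eq_or_lt_of_le hin with he | hlt
  · rw [he, Nat.sub_self]; simp [ext_zero]
  · have hpos2 : 0 < (n : ℕ) - i := by omega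
    have hlt2 : (n : ℕ) - i < (n : ℕ) := by omega
    rw [ext_pos a i h0, ext_pos a' i h0, ha ⟨i, h0⟩ hlt,
      ext_pos c _ hpos2, ext_pos c' _ hpos2, hc ⟨(n : ℕ) - i, hpos2⟩ hlt2]

noncomputable def Ginv {K g1 g2 : Type*} [Field K] [AddCommGroup g1] [Module K g1]
    [AddCommGroup g2] [Module K g2] (h2 : g2 →ₗ[K] g1) (br : g1 →ₗ[K] g1 →ₗ[K] g2)
    (y : ℕ+ → g1) (b : ℕ+) : g1 :=
  y b - (2 : K)⁻¹ • h2 (bconv br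
    (fun i => if h : (i : ℕ) < (b : ℕ) then Ginv h2 br y i else 0)
    (fun i => if h : (i : ℕ) < (b : ℕ) then Ginv h2 br y i else 0) b)
termination_by (b : ℕ)
decreasing_by all_goals exact h

lemma Ginv_spec {K g1 g2 : Type*} [Field K] [AddCommGroup g1] [Module K g1]
    [AddCommGroup g2] [Module K g2] (h2 : g2 →ₗ[K] g1) (br : g1 →ₗ[K] g1 →ₗ[K] g2)
    (y : ℕ+ → g1) (b : ℕ+) :
    Ginv h2 br y b = y b - (2 : K)⁻¹ • h2 (bconv br (Ginv h2 br y) (Ginv h2 br y) b) := by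
  rw [Ginv, bconv_congr br _ (Ginv h2 br y) _ (Ginv h2 br y) b
    (fun i hi => dif_pos hi) (fun i hi => dif_pos hi)]

lemma jacobi_sum {K g1 g2 g3 : Type*} [Field K] [AddCommGroup g1] [Module K g1]
    [AddCommGroup g2] [Module K g2] [AddCommGroup g3] [Module K g3]
    [CharZero K] (br : g1 →ₗ[K] g1 →ₗ[K] g2) (β : g2 →ₗ[K] g1 →ₗ[K] g3)
    (hJacobi : ∀ x y z : g1, β (br x y) z + β (br y z) x + β (br z x) y = 0)
    (τ : ℕ+ → g1) (n : ℕ) :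
    ∑ i ∈ Finset.range (n + 1),
      β (∑ p ∈ Finset.range (i + 1), br (ext τ p) (ext τ (i - p))) (ext τ (n - i)) = 0 := by
  classical
  set f : ℕ → ℕ → ℕ → g3 := fun p q r => β (br (ext τ p) (ext τ q)) (ext τ r) with hf
  set T : Finset ((_ : ℕ) × ℕ) := (Finset.range (n + 1)).sigma (fun i => Finset.range (i + 1))
    with hT
  have hmem : ∀ x : (_ : ℕ) × ℕ, x ∈ T ↔ x.2 ≤ x.1 ∧ x.1 ≤ n := by
    intro x
    simp only [hT, Finset.mem_sigma, Finset.mem_range]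
    omega
  have key : ∑ x ∈ T, f x.2 (x.1 - x.2) (n - x.1) = 0 := by
    have hS2 : (∑ x ∈ T, f (x.1 - x.2) (n - x.1) x.2)
        = ∑ x ∈ T, f x.2 (x.1 - x.2) (n - x.1) := by
      refine Finset.sum_nbij' (fun x => ⟨n - x.2, x.1 - x.2⟩)
        (fun x => ⟨n - x.1 + x.2, n - x.1⟩) ?_ ?_ ?_ ?_ ?_
      · rintro ⟨i, p⟩ ha; rw [hmem] at ha ⊢; dsimp only at ha ⊢; omega
      · rintro ⟨i, p⟩ ha; rw [hmem] at ha ⊢; dsimp only at ha ⊢; omega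
      · rintro ⟨i, p⟩ ha; rw [hmem] at ha; dsimp only at ha ⊢
        rw [show n - (n - p) + (i - p) = i by omega, show n - (n - p) = p by omega]
      · rintro ⟨i, p⟩ ha; rw [hmem] at ha; dsimp only at ha ⊢
        rw [show n - (n - i) = i by omega, show n - i + p - (n - i) = p by omega]
      · rintro ⟨i, p⟩ ha; rw [hmem] at ha; dsimp only at ha ⊢
        have e1 : n - (n - p) = p := by omega
        have e2 : (n - p) - (i - p) = n - i := by omega
        rw [e1, e2]
    have hS3 : (∑ x ∈ T, f (n - x.1) x.2 (x.1 - x.2))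
        = ∑ x ∈ T, f x.2 (x.1 - x.2) (n - x.1) := by
      refine Finset.sum_nbij' (fun x => ⟨n - x.1 + x.2, n - x.1⟩)
        (fun x => ⟨n - x.2, x.1 - x.2⟩) ?_ ?_ ?_ ?_ ?_
      · rintro ⟨i, p⟩ ha; rw [hmem] at ha ⊢; dsimp only at ha ⊢; omega
      · rintro ⟨i, p⟩ ha; rw [hmem] at ha ⊢; dsimp only at ha ⊢; omega
      · rintro ⟨i, p⟩ ha; rw [hmem] at ha; dsimp only at ha ⊢
        rw [show n - (n - i) = i by omega, show n - i + p - (n - i) = p by omega]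
      · rintro ⟨i, p⟩ ha; rw [hmem] at ha; dsimp only at ha ⊢
        rw [show n - (n - p) + (i - p) = i by omega, show n - (n - p) = p by omega]
      · rintro ⟨i, p⟩ ha; rw [hmem] at ha; dsimp only at ha ⊢
        have e1 : (n - i + p) - (n - i) = p := by omega
        have e2 : n - (n - i + p) = i - p := by omega
        rw [e1, e2]
    have h3 : (∑ x ∈ T, f x.2 (x.1 - x.2) (n - x.1))
        + (∑ x ∈ T, f x.2 (x.1 - x.2) (n - x.1))
        + (∑ x ∈ T, f x.2 (x.1 - x.2) (n - x.1)) = 0 := by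
      nth_rewrite 2 [← hS2]
      nth_rewrite 2 [← hS3]
      rw [← Finset.sum_add_distrib, ← Finset.sum_add_distrib]
      exact Finset.sum_eq_zero (fun x _ => hJacobi _ _ _)
    have h4 : (3 : K) • (∑ x ∈ T, f x.2 (x.1 - x.2) (n - x.1)) = 0 := by
      rw [show (3 : K) = 1 + 1 + 1 by norm_num, add_smul, add_smul, one_smul, h3]
    exact (smul_eq_zero.mp h4).resolve_left (by norm_num)
  rw [← key, Finset.sum_sigma]
  apply Finset.sum_congr rfl
  intro i _
  simp only [map_sum, LinearMap.sum_apply, hf]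

lemma F_injective {K g1 g2 : Type*} [Field K] [AddCommGroup g1] [Module K g1]
    [AddCommGroup g2] [Module K g2] (h2 : g2 →ₗ[K] g1) (br : g1 →ₗ[K] g1 →ₗ[K] g2) :
    Function.Injective
      (fun (a : ℕ+ → g1) => fun b => a b + (2 : K)⁻¹ • h2 (bconv br a a b)) := by
  intro a a' h
  have key : ∀ n : ℕ, ∀ b : ℕ+, (b : ℕ) ≤ n → a b = a' b := by
    intro n
    induction n with
    | zero => intro b hb; exact absurd hb (Nat.not_le.mpr b.pos)
    | succ n IH =>
      intro b hb
      have hc : bconv br a a b = bconv br a' a' b :=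
        bconv_congr br a a' a a' b
          (fun i hi => IH i (Nat.lt_succ_iff.mp (lt_of_lt_of_le hi hb)))
          (fun i hi => IH i (Nat.lt_succ_iff.mp (lt_of_lt_of_le hi hb)))
      have h2' := congrFun h b
      simp only at h2'
      rw [hc] at h2'
      exact add_right_cancel h2'
  funext b
  exact key (b : ℕ) b le_rfl

lemma F_surjective {K g1 g2 : Type*} [Field K] [AddCommGroup g1] [Module K g1]
    [AddCommGroup g2] [Module K g2] (h2 : g2 →ₗ[K] g1) (br : g1 →ₗ[K] g1 →ₗ[K] g2) :
    Function.Surjective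
      (fun (a : ℕ+ → g1) => fun b => a b + (2 : K)⁻¹ • h2 (bconv br a a b)) := by
  intro y
  refine ⟨Ginv h2 br y, funext fun b => ?_⟩
  simp only
  rw [Ginv_spec]
  abel

lemma d2_bconv {K g1 g2 g3 : Type*} [Field K] [AddCommGroup g1] [Module K g1]
    [AddCommGroup g2] [Module K g2] [AddCommGroup g3] [Module K g3]
    (d1 : g1 →ₗ[K] g2) (d2 : g2 →ₗ[K] g3)
    (br : g1 →ₗ[K] g1 →ₗ[K] g2) (β : g2 →ₗ[K] g1 →ₗ[K] g3)
    (hLeibniz : ∀ x y : g1, d2 (br x y) = β (d1 x) y + β (d1 y) x)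
    (τ : ℕ+ → g1) (b : ℕ+) :
    d2 (bconv br τ τ b) = (2 : K) • ∑ i ∈ Finset.range ((b : ℕ) + 1),
      β (d1 (ext τ i)) (ext τ ((b : ℕ) - i)) := by
  rw [bconv, map_sum,
    Finset.sum_congr rfl (fun i _ => hLeibniz (ext τ i) (ext τ ((b : ℕ) - i))),
    Finset.sum_add_distrib]
  have hrefl : (∑ i ∈ Finset.range ((b : ℕ) + 1), β (d1 (ext τ ((b : ℕ) - i))) (ext τ i))
      = ∑ i ∈ Finset.range ((b : ℕ) + 1), β (d1 (ext τ i)) (ext τ ((b : ℕ) - i)) := by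
    rw [← Finset.sum_range_reflect
      (fun i => β (d1 (ext τ i)) (ext τ ((b : ℕ) - i))) ((b : ℕ) + 1)]
    apply Finset.sum_congr rfl
    intro i hi
    have hib : i ≤ (b : ℕ) := Nat.lt_succ_iff.mp (Finset.mem_range.mp hi)
    rw [show (b : ℕ) + 1 - 1 - i = (b : ℕ) - i from by omega, Nat.sub_sub_self hib]
  rw [hrefl]
  exact (two_smul K _).symm

/-- The Kuranishi map F(a)_b = a_b + (1/2)h₂([a,a]_b) is a
bijection of the set of sequences {1,2,...} → g¹ with itself, and it
restricts to a bijection from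
MC∩N¹ = {τ | τ satisfies MC degreewise and τ_b ∈ range ∇₁ ⊔ range h₂ ∀b}
onto
Kur = {y | y_b ∈ range ∇₁ ∀b, and the obstructions of τ = F⁻¹(y) vanish:
π₂([τ,τ]_b) = 0 ∀b ≥ 1}. -/
theorem stmt15 (K : Type*) [Field K] [CharZero K]
    (g0 g1 g2 g3 H1 H2 : Type*)
    [AddCommGroup g0] [Module K g0] [AddCommGroup g1] [Module K g1]
    [AddCommGroup g2] [Module K g2] [AddCommGroup g3] [Module K g3]
    [AddCommGroup H1] [Module K H1] [AddCommGroup H2] [Module K H2]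
    (d0 : g0 →ₗ[K] g1) (d1 : g1 →ₗ[K] g2) (d2 : g2 →ₗ[K] g3)
    (h1 : g1 →ₗ[K] g0) (h2 : g2 →ₗ[K] g1) (h3 : g3 →ₗ[K] g2)
    (π1 : g1 →ₗ[K] H1) (n1 : H1 →ₗ[K] g1)
    (π2 : g2 →ₗ[K] H2) (n2 : H2 →ₗ[K] g2)
    (hdd1 : d1.comp d0 = 0) (hdd2 : d2.comp d1 = 0)
    (hSDR1 : d0.comp h1 + h2.comp d1 = LinearMap.id - n1.comp π1)
    (hSDR2 : d1.comp h2 + h3.comp d2 = LinearMap.id - n2.comp π2)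
    (hside1 : h1.comp h2 = 0) (hside2 : π1.comp h2 = 0)
    (hside3 : h1.comp n1 = 0) (hretr : π1.comp n1 = LinearMap.id)
    (hdn : d1.comp n1 = 0) (hπd : π2.comp d1 = 0)
    (br : g1 →ₗ[K] g1 →ₗ[K] g2) (hbrsymm : ∀ x y : g1, br x y = br y x)
    (β : g2 →ₗ[K] g1 →ₗ[K] g3)
    (hLeibniz : ∀ x y : g1, d2 (br x y) = β (d1 x) y + β (d1 y) x)
    (hJacobi : ∀ x y z : g1, β (br x y) z + β (br y z) x + β (br z x) y = 0) :
    Function.Bijective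
      (fun (a : ℕ+ → g1) => fun b => a b + (2 : K)⁻¹ • h2 (bconv br a a b)) ∧
    (fun (a : ℕ+ → g1) => fun b => a b + (2 : K)⁻¹ • h2 (bconv br a a b)) ''
        {τ : ℕ+ → g1 |
          (∀ b : ℕ+, d1 (τ b) + (2 : K)⁻¹ • bconv br τ τ b = 0) ∧
          (∀ b : ℕ+, τ b ∈ LinearMap.range n1 ⊔ LinearMap.range h2)}
      = {y : ℕ+ → g1 |
          (∀ b : ℕ+, y b ∈ LinearMap.range n1) ∧
          (∀ τ : ℕ+ → g1,
            (fun b => τ b + (2 : K)⁻¹ • h2 (bconv br τ τ b)) = y →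
            ∀ b : ℕ+, π2 (bconv br τ τ b) = 0)} := by
  have hinj := F_injective h2 br
  have hsurj := F_surjective h2 br
  refine ⟨⟨hinj, hsurj⟩, ?_⟩
  ext y
  simp only [Set.mem_image, Set.mem_setOf_eq]
  constructor
  · rintro ⟨τ, ⟨hMC, hN⟩, rfl⟩
    have hobs : ∀ b : ℕ+, π2 (bconv br τ τ b) = 0 := by
      intro b
      have e := congrArg π2 (hMC b)
      rw [map_add, map_smul, map_zero] at e
      have hπd' : π2 (d1 (τ b)) = 0 := by
        have := LinearMap.ext_iff.mp hπd (τ b)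
        simpa using this
      rw [hπd', zero_add] at e
      exact (smul_eq_zero.mp e).resolve_left (by norm_num)
    constructor
    · intro b
      simp only
      obtain ⟨x, hx, z, hz, hxz⟩ := Submodule.mem_sup.mp (hN b)
      obtain ⟨u, hu⟩ := hx
      obtain ⟨v, hv⟩ := hz
      have hh1 : h1 (τ b) = 0 := by
        rw [← hxz, map_add, ← hu, ← hv]
        have e1 := LinearMap.ext_iff.mp hside3 u
        have e2 := LinearMap.ext_iff.mp hside1 v
        simp only [LinearMap.comp_apply, LinearMap.zero_apply] at e1 e2
        rw [e1, e2, add_zero]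
      have e := LinearMap.ext_iff.mp hSDR1 (τ b)
      simp only [LinearMap.add_apply, LinearMap.comp_apply, LinearMap.sub_apply,
        LinearMap.id_apply] at e
      rw [hh1, map_zero, zero_add] at e
      have hd1τ : d1 (τ b) = -((2 : K)⁻¹ • bconv br τ τ b) :=
        eq_neg_of_add_eq_zero_left (hMC b)
      rw [hd1τ, map_neg, map_smul] at e
      refine ⟨π1 (τ b), ?_⟩
      have e' : τ b = -((2 : K)⁻¹ • h2 (bconv br τ τ b)) + n1 (π1 (τ b)) :=
        eq_add_of_sub_eq e.symm
      conv_rhs => rw [e']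
      abel
    · intro τ' hτ' b
      have hττ : τ' = τ := hinj hτ'
      rw [hττ]
      exact hobs b
  · rintro ⟨hy1, hy2⟩
    obtain ⟨τ, hτ⟩ := hsurj y
    have hobs : ∀ b : ℕ+, π2 (bconv br τ τ b) = 0 := hy2 τ hτ
    have hτb : ∀ b : ℕ+, τ b = y b - (2 : K)⁻¹ • h2 (bconv br τ τ b) := by
      intro b
      have := congrFun hτ b
      simp only at this
      exact eq_sub_of_add_eq this
    have hd1y : ∀ b : ℕ+, d1 (y b) = 0 := by
      intro b
      obtain ⟨u, hu⟩ := hy1 b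
      rw [← hu]
      have := LinearMap.ext_iff.mp hdn u
      simpa using this
    have key : ∀ n : ℕ, ∀ b : ℕ+, (b : ℕ) ≤ n →
        d1 (τ b) + (2 : K)⁻¹ • bconv br τ τ b = 0 := by
      intro n
      induction n with
      | zero => intro b hb; exact absurd hb (Nat.not_le.mpr b.pos)
      | succ n IH =>
        intro b hb
        have e4 : d2 (bconv br τ τ b) = 0 := by
          rw [d2_bconv d1 d2 br β hLeibniz τ b]
          have e5 : ∀ i ∈ Finset.range ((b : ℕ) + 1),
              β (d1 (ext τ i)) (ext τ ((b : ℕ) - i))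
              = (-(2 : K)⁻¹) • β (∑ p ∈ Finset.range (i + 1),
                  br (ext τ p) (ext τ (i - p))) (ext τ ((b : ℕ) - i)) := by
            intro i hi
            rcases Nat.eq_zero_or_pos i with h0 | h0
            · subst h0
              simp [ext_zero]
            rcases eq_or_lt_of_le (Nat.lt_succ_iff.mp (Finset.mem_range.mp hi)) with he | hlt
            · rw [he, Nat.sub_self, ext_zero]
              simp
            · have hin : i ≤ n := by omega
              have hIH := IH ⟨i, h0⟩ hin
              have hde : d1 (ext τ i) = (-(2 : K)⁻¹) • bconv br τ τ ⟨i, h0⟩ := by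
                rw [ext_pos τ i h0, neg_smul]
                exact eq_neg_of_add_eq_zero_left hIH
              rw [hde, map_smul, LinearMap.smul_apply]
              congr 1
          rw [Finset.sum_congr rfl e5, ← Finset.smul_sum,
            jacobi_sum br β hJacobi τ (b : ℕ), smul_zero, smul_zero]
        have e2 := LinearMap.ext_iff.mp hSDR2 (bconv br τ τ b)
        simp only [LinearMap.add_apply, LinearMap.comp_apply, LinearMap.sub_apply,
          LinearMap.id_apply] at e2
        rw [hobs b, map_zero, sub_zero, e4, map_zero, add_zero] at e2
        have ed : d1 (τ b) = d1 (y b) - (2 : K)⁻¹ • d1 (h2 (bconv br τ τ b)) := by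
          conv_lhs => rw [hτb b]
          rw [map_sub, map_smul]
        rw [ed, hd1y, zero_sub, e2]
        abel
    refine ⟨τ, ⟨fun b => key (b : ℕ) b le_rfl, ?_⟩, hτ⟩
    intro b
    rw [hτb b, sub_eq_add_neg]
    refine Submodule.add_mem_sup (hy1 b) ?_
    refine ⟨-((2 : K)⁻¹ • bconv br τ τ b), ?_⟩
    rw [map_neg, map_smul]
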